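/- Excess risk bound from uniform regression error under the margin condition: Let (x, y) be a random couple taking values in X × {0,1} for a measurable space X, with joint distribution P, marginal P_x, regression function eta(x) = P(y = 1 | x), Bayes rule f*(x) = 1{eta(x) ≥ 1/2}, and misclassification risk R(g) = P(y ≠ g(x)). Assume the margin condition: there exist c_M > 0 and gamma ≥ 0 such that P_x( 0 < |eta(x) − 1/2| ≤ t ) ≤ c_M·t^gamma for all t > 0. If eta_theta : X → R is measurable with sup_{x in X} |eta_theta(x) − eta(x)| ≤ epsilon for some epsilon > 0, then the plug-in rule f_theta(x) = 1{eta_theta(x) ≥ 1/2} satisfies R(f_theta) − R(f*) ≤ 2·c_M·epsilon^{1+gamma}. -/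

import Mathlib

open MeasureTheory Real
open scoped Classical

noncomputable section

variable {X : Type*} [MeasurableSpace X]

/-- The misclassification risk `R(g) = P(y ≠ g(x))` of a binary classifier
`g : X → Bool` with respect to a joint distribution `P` on `X × {0,1}`. -/
def misclassRisk (P : Measure (X × Bool)) (g : X → Bool) : ℝ :=
  (P {p : X × Bool | p.2 ≠ g p.1}).toReal

/-- The plug-in classifier `x ↦ 1{η(x) ≥ 1/2}` of a function `η : X → ℝ`. -/
def plugIn (η : X → ℝ) : X → Bool :=
  fun x => if 1 / 2 ≤ η x then true else false

/-- `η` is the regression function `η(x) = P(y = 1 | x)` of the joint distribution `P`: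
for every measurable `A ⊆ X`, `P(A × {1}) = ∫_A η dP_x` where `P_x` is the marginal. -/
def IsRegressionFunction (P : Measure (X × Bool)) (η : X → ℝ) : Prop :=
  Measurable η ∧ (∀ x, 0 ≤ η x) ∧ (∀ x, η x ≤ 1) ∧
    ∀ A : Set X, MeasurableSet A →
      (P (A ×ˢ ({true} : Set Bool))).toReal = ∫ x in A, η x ∂P.fst


lemma risk_eq (P : Measure (X × Bool)) [IsProbabilityMeasure P]
    (η : X → ℝ) (hη : IsRegressionFunction P η)
    (f : X → ℝ) (hf : Measurable f) :
    misclassRisk P (plugIn f) =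
      (P.fst {x | 1/2 ≤ f x}).toReal - ∫ x in {x | 1/2 ≤ f x}, η x ∂P.fst
        + ∫ x in {x | 1/2 ≤ f x}ᶜ, η x ∂P.fst := by
  obtain ⟨hmeas, h0, h1, hrep⟩ := hη
  set A : Set X := {x | 1/2 ≤ f x} with hAdef
  have hA : MeasurableSet A := measurableSet_le measurable_const hf
  have hset : {p : X × Bool | p.2 ≠ plugIn f p.1}
      = A ×ˢ ({false} : Set Bool) ∪ Aᶜ ×ˢ ({true} : Set Bool) := by
    ext ⟨x, b⟩
    by_cases hx : 1/2 ≤ f x <;> cases b <;>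
      simp [plugIn, hx, hAdef, Set.mem_prod]
  have hA1 : MeasurableSet (A ×ˢ ({false} : Set Bool)) :=
    hA.prod (measurableSet_singleton _)
  have hA2 : MeasurableSet (Aᶜ ×ˢ ({true} : Set Bool)) :=
    hA.compl.prod (measurableSet_singleton _)
  have hdisj : Disjoint (A ×ˢ ({false} : Set Bool)) (Aᶜ ×ˢ ({true} : Set Bool)) := by
    rw [Set.disjoint_left]
    rintro ⟨x, b⟩ ⟨_, hb1⟩ ⟨_, hb2⟩
    simp only [Set.mem_singleton_iff] at hb1 hb2
    rw [hb1] at hb2; exact Bool.false_ne_true hb2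
  have hsplit : P (A ×ˢ (Set.univ : Set Bool))
      = P (A ×ˢ ({false} : Set Bool)) + P (A ×ˢ ({true} : Set Bool)) := by
    rw [← measure_union ?_ (hA.prod (measurableSet_singleton _))]
    · congr 1
      rw [← Set.prod_union]
      congr 1
      ext b; cases b <;> simp
    · rw [Set.disjoint_left]
      rintro ⟨x, b⟩ ⟨_, hb1⟩ ⟨_, hb2⟩
      simp only [Set.mem_singleton_iff] at hb1 hb2
      rw [hb1] at hb2; exact Bool.false_ne_true hb2
  have hfalse : (P (A ×ˢ ({false} : Set Bool))).toReal
      = (P.fst A).toReal - ∫ x in A, η x ∂P.fst := by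
    rw [← hrep A hA]
    have huniv : P.fst A = P (A ×ˢ (Set.univ : Set Bool)) := by
      rw [Measure.fst_apply hA, Set.prod_univ]
    rw [huniv, hsplit, ENNReal.toReal_add (measure_ne_top _ _) (measure_ne_top _ _)]
    ring
  rw [misclassRisk, hset, measure_union hdisj hA2,
    ENNReal.toReal_add (measure_ne_top _ _) (measure_ne_top _ _),
    hfalse, hrep Aᶜ hA.compl]
/-- **Excess risk bound from uniform regression error under the margin condition**: if
`P_x(0 < |η - 1/2| ≤ t) ≤ c_M t^γ` for all `t > 0` and `sup_x |η_θ(x) - η(x)| ≤ ε`, then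
the plug-in rule `f_θ = 1{η_θ ≥ 1/2}` satisfies `R(f_θ) - R(f*) ≤ 2 c_M ε^{1+γ}`. -/
theorem plugin_excess_risk_uniform_bound
    (P : Measure (X × Bool)) [IsProbabilityMeasure P]
    (η : X → ℝ) (hη : IsRegressionFunction P η)
    (cM γ : ℝ) (hcM : 0 < cM) (hγ : 0 ≤ γ)
    (hmargin : ∀ t : ℝ, 0 < t →
      (P.fst {x | 0 < |η x - 1 / 2| ∧ |η x - 1 / 2| ≤ t}).toReal ≤ cM * t ^ γ)
    (ηθ : X → ℝ) (hηθ : Measurable ηθ)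
    (ε : ℝ) (hε : 0 < ε) (hunif : ∀ x, |ηθ x - η x| ≤ ε) :
    misclassRisk P (plugIn ηθ) - misclassRisk P (plugIn η) ≤ 2 * cM * ε ^ (1 + γ) := by
  obtain ⟨hmeas, h0, h1, hrep⟩ := hη
  set μ := P.fst with hμdef
  set Ag : Set X := {x | 1/2 ≤ ηθ x} with hAgdef
  set Af : Set X := {x | 1/2 ≤ η x} with hAfdef
  have hAg : MeasurableSet Ag := measurableSet_le measurable_const hηθ
  have hAf : MeasurableSet Af := measurableSet_le measurable_const hmeas
  -- integrability of η
  have hint : Integrable η μ := by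
    refine Integrable.mono' (integrable_const 1) hmeas.aestronglyMeasurable ?_
    filter_upwards with x
    rw [Real.norm_eq_abs, abs_le]
    exact ⟨by linarith [h0 x], h1 x⟩
  -- the function h = 1 - 2η
  set h : X → ℝ := fun x => 1 - 2 * η x with hhdef
  have hinth : Integrable h μ := (integrable_const 1).sub (hint.const_mul 2)
  -- risk formula in terms of h
  have key : ∀ (f : X → ℝ), Measurable f →
      misclassRisk P (plugIn f) = ∫ x in {x | 1/2 ≤ f x}, h x ∂μ + ∫ x, η x ∂μ := by
    intro f hf
    have hA : MeasurableSet {x | 1/2 ≤ f x} := measurableSet_le measurable_const hf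
    rw [risk_eq P η ⟨hmeas, h0, h1, hrep⟩ f hf]
    have hcompl : ∫ x in {x | 1/2 ≤ f x}ᶜ, η x ∂μ
        = ∫ x, η x ∂μ - ∫ x in {x | 1/2 ≤ f x}, η x ∂μ := by
      have := integral_add_compl hA hint
      linarith
    have hset : ∫ x in {x | 1/2 ≤ f x}, h x ∂μ
        = (μ {x | 1/2 ≤ f x}).toReal - 2 * ∫ x in {x | 1/2 ≤ f x}, η x ∂μ := by
      rw [hhdef]
      rw [integral_sub ((integrableOn_const (C := (1:ℝ)) (s := {x | 1/2 ≤ f x}) (μ := μ)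
        (measure_ne_top _ _) (by simp) : Integrable _ _))
        ((hint.integrableOn).const_mul 2)]
      rw [setIntegral_const, MeasureTheory.integral_const_mul]
      simp [Measure.real]
    rw [hcompl, hset]
    ring
  rw [key ηθ hηθ, key η hmeas]
  have hAgAf : (Af : Set X) ∩ Ag = Ag ∩ Af := Set.inter_comm _ _
  have split1 := integral_inter_add_diff (μ := μ) (f := h) (s := Ag) (t := Af) hAf
    hinth.integrableOn
  have split2 := integral_inter_add_diff (μ := μ) (f := h) (s := Af) (t := Ag) hAg
    hinth.integrableOn
  rw [hAgAf] at split2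
  have hexcess : (∫ x in Ag, h x ∂μ + ∫ x, η x ∂μ) - (∫ x in Af, h x ∂μ + ∫ x, η x ∂μ)
      = ∫ x in Ag \ Af, h x ∂μ - ∫ x in Af \ Ag, h x ∂μ := by linarith
  rw [hexcess]
  -- indicator form
  set S : Set X := {x | 0 < |η x - 1 / 2| ∧ |η x - 1 / 2| ≤ ε} with hSdef
  have hS : MeasurableSet S := by
    apply MeasurableSet.inter
    · exact measurableSet_lt measurable_const ((hmeas.sub measurable_const).abs)
    · exact measurableSet_le ((hmeas.sub measurable_const).abs) measurable_const
  have hG : Integrable (S.indicator fun _ => (2*ε : ℝ)) μ :=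
    (integrable_const _).indicator hS
  have hF1 : Integrable ((Ag \ Af).indicator h) μ := hinth.indicator (hAg.diff hAf)
  have hF2 : Integrable ((Af \ Ag).indicator h) μ := hinth.indicator (hAf.diff hAg)
  have hI1 : ∫ x in Ag \ Af, h x ∂μ = ∫ x, (Ag \ Af).indicator h x ∂μ :=
    (integral_indicator (hAg.diff hAf)).symm
  have hI2 : ∫ x in Af \ Ag, h x ∂μ = ∫ x, (Af \ Ag).indicator h x ∂μ :=
    (integral_indicator (hAf.diff hAg)).symm
  rw [hI1, hI2, ← integral_sub hF1 hF2]
  have hptwise : ∀ x, (Ag \ Af).indicator h x - (Af \ Ag).indicator h x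
      ≤ S.indicator (fun _ => (2*ε : ℝ)) x := by
    intro x
    have hGnn : (0:ℝ) ≤ S.indicator (fun _ => (2*ε : ℝ)) x :=
      Set.indicator_nonneg (fun _ _ => by linarith) x
    by_cases hg : x ∈ Ag \ Af
    · have hg' : x ∉ Af \ Ag := fun hc => hc.2 hg.1
      rw [Set.indicator_of_mem hg, Set.indicator_of_notMem hg']
      have hx1 : 1/2 ≤ ηθ x := hg.1
      have hx2 : η x < 1/2 := lt_of_not_ge hg.2
      have hxe : 1/2 - η x ≤ ε := by
        have := abs_le.1 (hunif x)
        linarith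
      have hxS : x ∈ S := by
        constructor
        · rw [abs_pos]; intro hc; rw [sub_eq_zero] at hc; linarith
        · rw [abs_le]; constructor <;> linarith
      rw [Set.indicator_of_mem hxS]
      simp only [hhdef, sub_zero]
      linarith
    · rw [Set.indicator_of_notMem hg]
      by_cases hf : x ∈ Af \ Ag
      · rw [Set.indicator_of_mem hf]
        have hx1 : 1/2 ≤ η x := hf.1
        have hx2 : ηθ x < 1/2 := lt_of_not_ge hf.2
        have hxe : η x - 1/2 ≤ ε := by
          have := abs_le.1 (hunif x)
          linarith
        rcases eq_or_lt_of_le hx1 with heq | hlt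
        · simp only [hhdef]
          rw [← heq]
          simpa using hGnn
        · have hxS : x ∈ S := by
            constructor
            · rw [abs_pos]; intro hc; rw [sub_eq_zero] at hc; linarith
            · rw [abs_le]; constructor <;> linarith
          rw [Set.indicator_of_mem hxS]
          simp only [hhdef]
          linarith
      · rw [Set.indicator_of_notMem hf]
        simpa using hGnn
  have hmono : ∫ x, ((Ag \ Af).indicator h x - (Af \ Ag).indicator h x) ∂μ
      ≤ ∫ x, S.indicator (fun _ => (2*ε : ℝ)) x ∂μ :=
    integral_mono (hF1.sub hF2) hG hptwise
  refine hmono.trans ?_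
  rw [integral_indicator_const _ hS, smul_eq_mul]
  have hbound := hmargin ε hε
  have : (μ S).toReal * (2*ε) ≤ cM * ε ^ γ * (2*ε) :=
    mul_le_mul_of_nonneg_right hbound (by linarith)
  refine this.trans ?_
  rw [Real.rpow_add hε, Real.rpow_one]
  ring_nf
  linarith [le_refl (cM * ε ^ γ * (2*ε))]
end
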